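/- arXiv:2303.15285 — 2 statements merged into one kernel-verified Lean document; each statement's English description precedes it below -/
import Mathlib

section
/- If every recursively enumerable subset of ℕ is weakly representable in a consistent recursively enumerable theory T, then the set of theorems of T is creative; equivalently, every c.e. set many-one reduces to the set of (Gödel numbers of) theorems of T. -/
open FirstOrder Language

/-- The numeral `n̄ = Sⁿ0` built from a constant `z` and a unary function `s`. -/
def numeral {L : Language} (z : L.Constants) (s : L.Functions 1) : ℕ → L.Term Empty
  | 0 => z.term
  | n + 1 => s.apply₁ (numeral z s n)

/-- If every r.e. set is weakly representable in a consistent r.e. theory `T`,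
then the set of theorem-codes of `T` is creative: it is c.e. and every c.e. set
many-one reduces to it. -/
theorem rew_implies_theorems_creative {L : Language}
    (z : L.Constants) (s : L.Functions 1) (T : L.Theory)
    (hcon : T.IsSatisfiable)
    (efml : L.Formula (Fin 1) → ℕ) (esent : L.Sentence → ℕ)
    (hesent : Function.Injective esent)
    -- substitution of numerals is computable on codes:
    (sub : ℕ → ℕ → ℕ) (hsubc : Computable₂ sub)
    (hsub : ∀ (φ : L.Formula (Fin 1)) (n : ℕ),
      sub (efml φ) n = esent (φ.subst fun _ => numeral z s n))
    -- the set of Gödel numbers of theorems of T: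
    (TP : Set ℕ) (hTP : TP = {m | ∃ ψ : L.Sentence, esent ψ = m ∧ T ⊨ᵇ ψ})
    -- T is recursively enumerable:
    (hTPre : REPred (· ∈ TP))
    -- every r.e. set is weakly representable in T:
    (hREW : ∀ A : Set ℕ, REPred (· ∈ A) →
      ∃ φ : L.Formula (Fin 1),
        ∀ n : ℕ, n ∈ A ↔ T ⊨ᵇ (φ.subst fun _ => numeral z s n)) :
    REPred (· ∈ TP) ∧
      ∀ B : Set ℕ, REPred (· ∈ B) →
        ∃ f : ℕ → ℕ, Computable f ∧ ∀ n, n ∈ B ↔ f n ∈ TP := by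
  refine ⟨hTPre, fun B hB => ?_⟩
  obtain ⟨φ, hφ⟩ := hREW B hB
  refine ⟨fun n => sub (efml φ) n, hsubc.comp (Computable.const _) Computable.id, fun n => ?_⟩
  show n ∈ B ↔ sub (efml φ) n ∈ TP
  rw [hsub, hTP]
  constructor
  · intro hn
    exact ⟨_, rfl, (hφ n).mp hn⟩
  · rintro ⟨ψ, hψe, hψ⟩
    exact (hφ n).mpr (hesent hψe ▸ hψ)
end

section
/- If a consistent recursively enumerable theory T strongly represents every computable subset of ℕ, then the pair (T_P, T_R) of theorem-codes and refutable-sentence-codes of T is recursively inseparable: no computable set X satisfies T_P ⊆ X and X ∩ T_R = ∅. -/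
open FirstOrder Language

/-- If a consistent r.e. theory `T` strongly represents every computable subset
of ℕ, then the nuclei pair `(T_P, T_R)` of theorem-codes and
refutable-sentence-codes is recursively inseparable. -/
theorem rss_implies_nuclei_recursively_inseparable {L : Language}
    (z : L.Constants) (s : L.Functions 1) (T : L.Theory)
    (hcon : T.IsSatisfiable)
    (efml : L.Formula (Fin 1) → ℕ) (esent : L.Sentence → ℕ)
    (hesent : Function.Injective esent)
    -- substitution of numerals is computable on codes:
    (sub : ℕ → ℕ → ℕ) (hsubc : Computable₂ sub)
    (hsub : ∀ (φ : L.Formula (Fin 1)) (n : ℕ),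
      sub (efml φ) n = esent (φ.subst fun _ => numeral z s n))
    -- negation is computable on codes:
    (negc : ℕ → ℕ) (hnegc : Computable negc)
    (hneg : ∀ ψ : L.Sentence, negc (esent ψ) = esent (BoundedFormula.not ψ))
    -- T is recursively enumerable:
    (hre : REPred fun m => ∃ ψ : L.Sentence, esent ψ = m ∧ T ⊨ᵇ ψ)
    -- every computable set is strongly representable in T:
    (hRSS : ∀ Y : Set ℕ, ComputablePred (· ∈ Y) →
      ∃ φ : L.Formula (Fin 1),
        (∀ n ∈ Y, T ⊨ᵇ (φ.subst fun _ => numeral z s n)) ∧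
        (∀ n ∉ Y, T ⊨ᵇ BoundedFormula.not (φ.subst fun _ => numeral z s n))) :
    ¬ ∃ X : Set ℕ, ComputablePred (· ∈ X) ∧
        {m | ∃ ψ : L.Sentence, esent ψ = m ∧ T ⊨ᵇ ψ} ⊆ X ∧
        X ∩ {m | ∃ ψ : L.Sentence, esent ψ = m ∧ T ⊨ᵇ BoundedFormula.not ψ} = ∅ := by
  rintro ⟨X, hXc, hP, hR⟩
  obtain ⟨f, hf, hfX⟩ := ComputablePred.computable_iff.mp hXc
  set D : Set ℕ := {n | sub n n ∉ X} with hD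
  have hDc : ComputablePred (· ∈ D) := by
    apply ComputablePred.computable_iff.mpr
    refine ⟨fun n => !f (sub n n), Primrec.not.to_comp.comp
      (hf.comp (hsubc.comp Computable.id Computable.id)), ?_⟩
    funext n
    have : (n ∈ X) = (f n = true) := congrFun hfX n
    simp [hD, Set.mem_setOf_eq, congrFun hfX (sub n n)]
  obtain ⟨φ, h1, h2⟩ := hRSS D hDc
  set e := efml φ with he
  by_cases hmem : e ∈ D
  · exact hmem (hP ⟨_, (hsub φ e).symm, h1 e hmem⟩)
  · have hx : sub e e ∈ X := not_not.mp hmem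
    have hr : sub e e ∈ {m | ∃ ψ : L.Sentence, esent ψ = m ∧ T ⊨ᵇ BoundedFormula.not ψ} :=
      ⟨_, (hsub φ e).symm, h2 e hmem⟩
    exact Set.eq_empty_iff_forall_notMem.mp hR (sub e e) ⟨hx, hr⟩
end
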